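/- Let 𝒮 be a finite nonempty state set and 𝒜 a finite nonempty action set. For each a ∈ 𝒜 let P_a be a row-stochastic matrix on 𝒮 and r_a : 𝒮 → ℝ a reward vector. Let v : 𝒮 → ℝ be a vector with span(v) := max_s v(s) − min_s v(s) ≤ D, and let c ∈ ℝ satisfy min_{a∈𝒜} { r_a(s) + Σ_{s′} P_a(s′|s) v(s′) } − v(s) ≥ c for every s ∈ 𝒮. Define u_0 ≡ 0 and u_{i+1}(s) = min_{a∈𝒜} { r_a(s) + Σ_{s′} P_a(s′|s) u_i(s′) } for i ≥ 0. Then for every i ≥ 0 and every s ∈ 𝒮, u_i(s) ≥ i·c + v(s) − max_{s′} v(s′); in particular u_i(s) ≥ i·c − D. -/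
import Mathlib


/-- Lower bound for the finite-horizon minimizing dynamic-programming iterates:
if `span(v) ≤ D` and `min_a { r_a(s) + (P_a v)(s) } − v(s) ≥ c` for every `s`, then the
iterates `u_0 ≡ 0`, `u_{i+1}(s) = min_a { r_a(s) + (P_a u_i)(s) }` satisfy
`u_i(s) ≥ i·c + v(s) − max v` and in particular `u_i(s) ≥ i·c − D`. -/
theorem dp_iterates_lower_bound
    {𝒮 𝒜 : Type*} [Fintype 𝒮] [Nonempty 𝒮] [Fintype 𝒜] [Nonempty 𝒜]
    (P : 𝒜 → 𝒮 → 𝒮 → ℝ)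
    (hP : ∀ a, (∀ s s', 0 ≤ P a s s') ∧ ∀ s, ∑ s', P a s s' = 1)
    (r : 𝒜 → 𝒮 → ℝ)
    (v : 𝒮 → ℝ) (D : ℝ) (hD : 0 ≤ D)
    (hspan : (⨆ s, v s) - (⨅ s, v s) ≤ D)
    (c : ℝ)
    (hc : ∀ s, (⨅ a, (r a s + ∑ s', P a s s' * v s')) - v s ≥ c)
    (u : ℕ → 𝒮 → ℝ)
    (hu0 : ∀ s, u 0 s = 0)
    (hu : ∀ i s, u (i + 1) s = ⨅ a, (r a s + ∑ s', P a s s' * u i s')) :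
    ∀ (i : ℕ) (s : 𝒮),
      u i s ≥ i * c + v s - (⨆ s', v s') ∧ u i s ≥ i * c - D := by

  have hM : ∀ s, v s ≤ ⨆ s', v s' := fun s => le_ciSup (Finite.bddAbove_range v) s
  have hm : ∀ s, (⨅ s', v s') ≤ v s := fun s => ciInf_le (Finite.bddBelow_range v) s
  have key : ∀ (i : ℕ) (s : 𝒮), u i s ≥ i * c + v s - (⨆ s', v s') := by
    intro i
    induction i with
    | zero =>
      intro s
      rw [hu0]
      have := hM s
      push_cast
      linarith
    | succ i ih =>
      intro s
      rw [hu i s]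
      have step : ∀ a, ((i : ℝ) * c - (⨆ s', v s')) + (r a s + ∑ s', P a s s' * v s')
          ≤ r a s + ∑ s', P a s s' * u i s' := by
        intro a
        have h1 : ∑ s', P a s s' * ((i : ℝ) * c + v s' - (⨆ s'', v s''))
            ≤ ∑ s', P a s s' * u i s' :=
          Finset.sum_le_sum fun s' _ => mul_le_mul_of_nonneg_left (ih s') ((hP a).1 s s')
        have h2 : ∑ s', P a s s' * ((i : ℝ) * c + v s' - (⨆ s'', v s''))
            = ((i : ℝ) * c - (⨆ s'', v s'')) * (∑ s', P a s s') + ∑ s', P a s s' * v s' := by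
          rw [Finset.mul_sum, ← Finset.sum_add_distrib]
          congr 1; ext s'; ring
        rw [(hP a).2 s] at h2
        rw [h2] at h1
        linarith
      have hinf : ((i : ℝ) * c - (⨆ s', v s')) + (⨅ a, (r a s + ∑ s', P a s s' * v s'))
          ≤ ⨅ a, (r a s + ∑ s', P a s s' * u i s') := by
        apply le_ciInf
        intro a
        have h3 : (⨅ a, (r a s + ∑ s', P a s s' * v s')) ≤ r a s + ∑ s', P a s s' * v s' :=
          ciInf_le (Finite.bddBelow_range _) a
        have := step a
        linarith
      have hcs := hc s
      push_cast
      linarith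
  intro i s
  refine ⟨key i s, ?_⟩
  have h1 := key i s
  have h2 := hm s
  linarith
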